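/- Geodesic midpoint log-concavity of Lieb's formulation: let (B, p) be a feasible Brascamp-Lieb datum with B_j ∈ R^{n_j × n} each having full row rank and p_j ≥ 0, and define for positive definite A_j: L(A_1,...,A_m) := Σ_j p_j log det(A_j) − log det(Σ_j p_j B_j^T A_j B_j). Then for all positive definite tuples (P_j), (Q_j): L(P_1 # Q_1, ..., P_m # Q_m) ≥ (1/2) L(P_1,...,P_m) + (1/2) L(Q_1,...,Q_m). -/

import Mathlib

open Matrix

/-- Real power of a matrix via the spectral decomposition (defined for Hermitian input). -/
noncomputable def mpow {d : ℕ} (A : Matrix (Fin d) (Fin d) ℝ) (t : ℝ) : Matrix (Fin d) (Fin d) ℝ :=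
  if hA : A.IsHermitian then
    (hA.eigenvectorUnitary : Matrix (Fin d) (Fin d) ℝ) *
      Matrix.diagonal (fun i => hA.eigenvalues i ^ t) *
      star (hA.eigenvectorUnitary : Matrix (Fin d) (Fin d) ℝ)
  else A

/-- The geodesic `X #ₜ Y = X^{1/2} (X^{-1/2} Y X^{-1/2})^t X^{1/2}`. -/
noncomputable def geo {d : ℕ} (X Y : Matrix (Fin d) (Fin d) ℝ) (t : ℝ) : Matrix (Fin d) (Fin d) ℝ :=
  mpow X (1/2) * mpow (mpow X (-(1/2)) * Y * mpow X (-(1/2))) t * mpow X (1/2)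

/-- The matrix geometric mean `X # Y`. -/
noncomputable def gmean {d : ℕ} (X Y : Matrix (Fin d) (Fin d) ℝ) : Matrix (Fin d) (Fin d) ℝ :=
  geo X Y (1/2)

variable {d : ℕ}

lemma mpow_def {A : Matrix (Fin d) (Fin d) ℝ} (hA : A.IsHermitian) (t : ℝ) :
    mpow A t = (hA.eigenvectorUnitary : Matrix (Fin d) (Fin d) ℝ) *
      Matrix.diagonal (fun i => hA.eigenvalues i ^ t) *
      star (hA.eigenvectorUnitary : Matrix (Fin d) (Fin d) ℝ) := dif_pos hA

lemma mpow_isHermitian {A : Matrix (Fin d) (Fin d) ℝ} (hA : A.IsHermitian) (t : ℝ) :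
    (mpow A t).IsHermitian := by
  rw [mpow_def hA]
  unfold Matrix.IsHermitian
  simp [Matrix.conjTranspose_mul, Matrix.mul_assoc, Matrix.diagonal_conjTranspose,
    Matrix.star_eq_conjTranspose, Matrix.conjTranspose_eq_transpose_of_trivial,
    Matrix.transpose_transpose]

lemma conj_mul_conj {U D1 D2 : Matrix (Fin d) (Fin d) ℝ} (h1 : star U * U = 1) :
    (U * D1 * star U) * (U * D2 * star U) = U * (D1 * D2) * star U := by
  calc (U * D1 * star U) * (U * D2 * star U)
      = U * D1 * (star U * U) * D2 * star U := by simp only [Matrix.mul_assoc]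
    _ = U * (D1 * D2) * star U := by rw [h1]; simp only [Matrix.mul_assoc, Matrix.one_mul]

lemma mpow_mul_mpow {A : Matrix (Fin d) (Fin d) ℝ} (hA : A.PosDef) (s t : ℝ) :
    mpow A s * mpow A t = mpow A (s + t) := by
  have h1 : star (hA.1.eigenvectorUnitary : Matrix (Fin d) (Fin d) ℝ) *
      (hA.1.eigenvectorUnitary : Matrix (Fin d) (Fin d) ℝ) = 1 :=
    (Matrix.mem_unitaryGroup_iff').mp (hA.1.eigenvectorUnitary).2
  rw [mpow_def hA.1, mpow_def hA.1, mpow_def hA.1, conj_mul_conj h1,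
    Matrix.diagonal_mul_diagonal]
  have he : (fun i => hA.1.eigenvalues i ^ s * hA.1.eigenvalues i ^ t)
      = fun i => hA.1.eigenvalues i ^ (s + t) :=
    funext fun i => (Real.rpow_add (hA.eigenvalues_pos i) s t).symm
  rw [he]

lemma mpow_zero {A : Matrix (Fin d) (Fin d) ℝ} (hA : A.IsHermitian) :
    mpow A 0 = 1 := by
  have h1 : (hA.eigenvectorUnitary : Matrix (Fin d) (Fin d) ℝ) *
      star (hA.eigenvectorUnitary : Matrix (Fin d) (Fin d) ℝ) = 1 :=
    (Matrix.mem_unitaryGroup_iff).mp (hA.eigenvectorUnitary).2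
  rw [mpow_def hA]
  simp [Real.rpow_zero, h1]

lemma mpow_one {A : Matrix (Fin d) (Fin d) ℝ} (hA : A.IsHermitian) :
    mpow A 1 = A := by
  rw [mpow_def hA]
  simp only [Real.rpow_one]
  exact (hA.spectral_theorem).symm

lemma posDef_conj {M C : Matrix (Fin d) (Fin d) ℝ} (hM : M.PosDef)
    (hC : ∃ C', C * C' = 1 ∧ C' * C = 1) : (Cᴴ * M * C).PosDef := by
  obtain ⟨C', hCC', hC'C⟩ := hC
  rw [Matrix.posDef_iff_dotProduct_mulVec]
  constructor
  · have : (Cᴴ * M * C)ᴴ = Cᴴ * Mᴴ * C := by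
      simp [Matrix.conjTranspose_mul, Matrix.mul_assoc]
    rw [Matrix.IsHermitian, this, hM.1.eq]
  · intro x hx
    have hCx : C *ᵥ x ≠ 0 := by
      intro h
      apply hx
      have : (C' * C) *ᵥ x = C' *ᵥ (C *ᵥ x) := (Matrix.mulVec_mulVec _ _ _).symm
      rw [hC'C, Matrix.one_mulVec, h, Matrix.mulVec_zero] at this
      exact this
    have := hM.dotProduct_mulVec_pos hCx
    have heq : star x ⬝ᵥ ((Cᴴ * M * C) *ᵥ x) = star (C *ᵥ x) ⬝ᵥ (M *ᵥ (C *ᵥ x)) := by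
      rw [← Matrix.mulVec_mulVec, ← Matrix.mulVec_mulVec, Matrix.dotProduct_mulVec]
      congr 1
      rw [Matrix.conjTranspose_eq_transpose_of_trivial, Matrix.vecMul_transpose]
      simp [star_trivial]
    rw [heq]
    exact this

lemma mpow_posDef {A : Matrix (Fin d) (Fin d) ℝ} (hA : A.PosDef) (t : ℝ) :
    (mpow A t).PosDef := by
  have h1 : star (hA.1.eigenvectorUnitary : Matrix (Fin d) (Fin d) ℝ) *
      (hA.1.eigenvectorUnitary : Matrix (Fin d) (Fin d) ℝ) = 1 :=
    (Matrix.mem_unitaryGroup_iff').mp (hA.1.eigenvectorUnitary).2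
  have h2 : (hA.1.eigenvectorUnitary : Matrix (Fin d) (Fin d) ℝ) *
      star (hA.1.eigenvectorUnitary : Matrix (Fin d) (Fin d) ℝ) = 1 :=
    (Matrix.mem_unitaryGroup_iff).mp (hA.1.eigenvectorUnitary).2
  rw [mpow_def hA.1]
  have hd : (Matrix.diagonal fun i => hA.1.eigenvalues i ^ t).PosDef := by
    rw [Matrix.posDef_diagonal_iff]
    exact fun i => Real.rpow_pos_of_pos (hA.eigenvalues_pos i) t
  have := posDef_conj (C := star (hA.1.eigenvectorUnitary : Matrix (Fin d) (Fin d) ℝ)) hd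
    ⟨(hA.1.eigenvectorUnitary : Matrix (Fin d) (Fin d) ℝ), h1, h2⟩
  simpa [Matrix.star_eq_conjTranspose, Matrix.conjTranspose_conjTranspose] using this


lemma gmean_spec {P Q : Matrix (Fin d) (Fin d) ℝ} (hP : P.PosDef) (hQ : Q.PosDef) :
    (gmean P Q).PosDef ∧ gmean P Q * P⁻¹ * gmean P Q = Q ∧
      Real.log (gmean P Q).det = (1/2) * Real.log P.det + (1/2) * Real.log Q.det := by
  set S := mpow P (1/2) with hSdef
  set T := mpow P (-(1/2)) with hTdef
  have hS : S.PosDef := mpow_posDef hP _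
  have hT : T.PosDef := mpow_posDef hP _
  have hST : S * T = 1 := by
    rw [hSdef, hTdef, mpow_mul_mpow hP]
    have : (1/2 : ℝ) + -(1/2) = 0 := by norm_num
    rw [this]; exact mpow_zero hP.1
  have hTS : T * S = 1 := by
    rw [hSdef, hTdef, mpow_mul_mpow hP]
    have : (-(1/2) : ℝ) + 1/2 = 0 := by norm_num
    rw [this]; exact mpow_zero hP.1
  have hSS : S * S = P := by
    rw [hSdef, mpow_mul_mpow hP]
    have : (1/2 : ℝ) + 1/2 = 1 := by norm_num
    rw [this]; exact mpow_one hP.1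
  have hM : (T * Q * T).PosDef := by
    have := posDef_conj (C := T) hQ ⟨S, hTS, hST⟩
    rwa [hT.1.eq] at this
  set R := mpow (T * Q * T) (1/2) with hRdef
  have hR : R.PosDef := mpow_posDef hM _
  have hRR : R * R = T * Q * T := by
    rw [hRdef, mpow_mul_mpow hM]
    have : (1/2 : ℝ) + 1/2 = 1 := by norm_num
    rw [this]; exact mpow_one hM.1
  have hG : gmean P Q = S * R * S := rfl
  have hGpd : (gmean P Q).PosDef := by
    rw [hG]
    have := posDef_conj (C := S) hR ⟨T, hST, hTS⟩
    rwa [hS.1.eq] at this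
  have hPinv : P⁻¹ = T * T := by
    apply Matrix.inv_eq_right_inv
    rw [← hSS]
    calc S * S * (T * T) = S * (S * T) * T := by simp only [Matrix.mul_assoc]
      _ = 1 := by rw [hST, Matrix.mul_one, hST]
  have hGPG : gmean P Q * P⁻¹ * gmean P Q = Q := by
    rw [hG, hPinv]
    calc S * R * S * (T * T) * (S * R * S)
        = S * R * ((S * T) * (T * S)) * R * S := by simp only [Matrix.mul_assoc]
      _ = S * (R * R) * S := by
          rw [hST, hTS, Matrix.mul_one]
          simp only [Matrix.mul_assoc, Matrix.one_mul]
      _ = (S * T) * Q * (T * S) := by rw [hRR]; simp only [Matrix.mul_assoc]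
      _ = Q := by rw [hST, hTS, Matrix.one_mul, Matrix.mul_one]
  refine ⟨hGpd, hGPG, ?_⟩
  have hSne : S.det ≠ 0 := ne_of_gt hS.det_pos
  have hTne : T.det ≠ 0 := ne_of_gt hT.det_pos
  have hRne : R.det ≠ 0 := ne_of_gt hR.det_pos
  have hQne : Q.det ≠ 0 := ne_of_gt hQ.det_pos
  have la : Real.log S.det + Real.log S.det = Real.log P.det := by
    rw [← Real.log_mul hSne hSne, ← Matrix.det_mul, hSS]
  have lb : Real.log R.det + Real.log R.det
      = Real.log T.det + Real.log Q.det + Real.log T.det := by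
    rw [← Real.log_mul hRne hRne, ← Matrix.det_mul, hRR, Matrix.det_mul, Matrix.det_mul,
      Real.log_mul (mul_ne_zero hTne hQne) hTne, Real.log_mul hTne hQne]
  have lc : Real.log T.det + Real.log S.det = 0 := by
    rw [← Real.log_mul hTne hSne, ← Matrix.det_mul, hTS, Matrix.det_one, Real.log_one]
  have lg : Real.log (gmean P Q).det
      = Real.log S.det + Real.log R.det + Real.log S.det := by
    rw [hG, Matrix.det_mul, Matrix.det_mul,
      Real.log_mul (mul_ne_zero hSne hRne) hSne, Real.log_mul hSne hRne]
  rw [lg]; linarith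

lemma one_le_det_of_sub_one_posSemidef {M : Matrix (Fin d) (Fin d) ℝ}
    (h : (M - 1).PosSemidef) : 1 ≤ M.det := by
  have hM : M.IsHermitian := by
    have h1 : M = (M - 1) + 1 := by rw [sub_add_cancel]
    rw [h1]; exact h.1.add (Matrix.isHermitian_one)
  have hev : ∀ i, 1 ≤ hM.eigenvalues i := by
    intro i
    set v : Fin d → ℝ := ⇑(hM.eigenvectorBasis i) with hv
    have hnorm : v ⬝ᵥ v = 1 := by
      have h1 : ‖hM.eigenvectorBasis i‖ = 1 := hM.eigenvectorBasis.orthonormal.1 i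
      rw [EuclideanSpace.norm_eq] at h1
      rw [Real.sqrt_eq_one] at h1
      calc v ⬝ᵥ v = ∑ j, ‖v j‖ ^ 2 := by
            simp [dotProduct, Real.norm_eq_abs, sq_abs, pow_two]
        _ = 1 := h1
    have h2 := h.dotProduct_mulVec_nonneg v
    have h3 : (M - 1) *ᵥ v = hM.eigenvalues i • v - v := by
      rw [Matrix.sub_mulVec, Matrix.one_mulVec, hM.mulVec_eigenvectorBasis]
    rw [h3] at h2
    have h4 : star v = v := by simp [star_trivial]
    rw [h4, dotProduct_sub, dotProduct_smul, hnorm] at h2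
    simpa using h2
  have hdet : M.det = ∏ i, hM.eigenvalues i := by
    have := hM.det_eq_prod_eigenvalues
    simpa [RCLike.ofReal_real_eq_id] using this
  rw [hdet]
  calc (1 : ℝ) = ∏ _i : Fin d, 1 := by simp
    _ ≤ ∏ i, hM.eigenvalues i :=
        Finset.prod_le_prod (fun i _ => zero_le_one) (fun i _ => hev i)

lemma det_le_det_of_sub_posSemidef {E Y : Matrix (Fin d) (Fin d) ℝ}
    (hE : E.PosDef) (h : (Y - E).PosSemidef) : E.det ≤ Y.det := by
  set F := mpow E (-(1/2)) with hFdef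
  have hF : F.PosDef := mpow_posDef hE _
  have hFEF : F * E * F = 1 := by
    have h0 : F * E * F = mpow E (-(1/2)) * mpow E 1 * mpow E (-(1/2)) := by
      rw [hFdef, mpow_one hE.1]
    rw [h0, mpow_mul_mpow hE, mpow_mul_mpow hE]
    have : (-(1/2) : ℝ) + 1 + -(1/2) = 0 := by norm_num
    rw [this]; exact mpow_zero hE.1
  have hps : (F * Y * F - 1).PosSemidef := by
    have h1 := h.conjTranspose_mul_mul_same F
    rw [hF.1.eq] at h1
    have h2 : F * (Y - E) * F = F * Y * F - 1 := by
      rw [Matrix.mul_sub, Matrix.sub_mul, hFEF]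
    rwa [h2] at h1
  have h1le := one_le_det_of_sub_one_posSemidef hps
  have hFne : F.det ≠ 0 := ne_of_gt hF.det_pos
  have hd1 : F.det * E.det * F.det = 1 := by
    rw [← Matrix.det_mul, ← Matrix.det_mul, hFEF, Matrix.det_one]
  have hd2 : F.det * Y.det * F.det = (F * Y * F).det := by
    rw [Matrix.det_mul, Matrix.det_mul]
  nlinarith [hF.det_pos, hE.det_pos, sq_nonneg (F.det * (Y.det - E.det))]

lemma vecMul_symm {M : Matrix (Fin d) (Fin d) ℝ} (hM : Mᵀ = M) (v : Fin d → ℝ) :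
    v ᵥ* M = M *ᵥ v := by
  rw [← Matrix.mulVec_transpose, hM]

lemma quad_nonneg_of_gpg {P G Qm : Matrix (Fin d) (Fin d) ℝ} (hP : P.PosDef)
    (hG : G.IsHermitian) (hQeq : G * P⁻¹ * G = Qm) (x y : Fin d → ℝ) :
    0 ≤ x ⬝ᵥ (P *ᵥ x) + 2 * (x ⬝ᵥ (G *ᵥ y)) + y ⬝ᵥ (Qm *ᵥ y) := by
  have hPdet : IsUnit P.det := isUnit_iff_ne_zero.mpr (ne_of_gt hP.det_pos)
  have hPP : P * P⁻¹ = 1 := Matrix.mul_nonsing_inv P hPdet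
  have hPt : Pᵀ = P := by
    rw [← Matrix.conjTranspose_eq_transpose_of_trivial, hP.1.eq]
  have hGt : Gᵀ = G := by
    rw [← Matrix.conjTranspose_eq_transpose_of_trivial, hG.eq]
  obtain ⟨w, hw⟩ : ∃ w, G *ᵥ y = w := ⟨_, rfl⟩
  have c1 : (P⁻¹ *ᵥ w) ⬝ᵥ (P *ᵥ x) = w ⬝ᵥ x := by
    rw [Matrix.dotProduct_mulVec, vecMul_symm hPt, Matrix.mulVec_mulVec, hPP,
      Matrix.one_mulVec]
  have c2 : y ⬝ᵥ (Qm *ᵥ y) = w ⬝ᵥ (P⁻¹ *ᵥ w) := by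
    rw [← hQeq, ← Matrix.mulVec_mulVec, hw, ← Matrix.mulVec_mulVec,
      Matrix.dotProduct_mulVec, vecMul_symm hGt, hw]
  have hPz : P *ᵥ (x + P⁻¹ *ᵥ w) = P *ᵥ x + w := by
    rw [Matrix.mulVec_add, Matrix.mulVec_mulVec, hPP, Matrix.one_mulVec]
  have h0 : 0 ≤ (x + P⁻¹ *ᵥ w) ⬝ᵥ (P *ᵥ (x + P⁻¹ *ᵥ w)) := by
    simpa [star_trivial] using hP.posSemidef.dotProduct_mulVec_nonneg (x + P⁻¹ *ᵥ w)
  rw [hPz, add_dotProduct, dotProduct_add, dotProduct_add] at h0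
  have c4 : (P⁻¹ *ᵥ w) ⬝ᵥ w = w ⬝ᵥ (P⁻¹ *ᵥ w) := dotProduct_comm _ _
  have c5 : w ⬝ᵥ x = x ⬝ᵥ w := dotProduct_comm _ _
  rw [hw, c2]
  linarith [h0, c1, c4, c5]

lemma key_det_ineq {X Y Z : Matrix (Fin d) (Fin d) ℝ} (hX : X.PosDef) (hY : Y.IsHermitian)
    (hZ : Z.PosDef)
    (h : ∀ u v : Fin d → ℝ, 0 ≤ u ⬝ᵥ (X *ᵥ u) + 2 * (u ⬝ᵥ (Z *ᵥ v)) + v ⬝ᵥ (Y *ᵥ v)) :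
    Z.det * Z.det ≤ X.det * Y.det := by
  have hXdet : IsUnit X.det := isUnit_iff_ne_zero.mpr (ne_of_gt hX.det_pos)
  have hZdet : IsUnit Z.det := isUnit_iff_ne_zero.mpr (ne_of_gt hZ.det_pos)
  have hXX : X * X⁻¹ = 1 := Matrix.mul_nonsing_inv X hXdet
  have hZt : Zᵀ = Z := by
    rw [← Matrix.conjTranspose_eq_transpose_of_trivial, hZ.1.eq]
  have hEpd : (Z * X⁻¹ * Z).PosDef := by
    have := posDef_conj (C := Z) hX.inv
      ⟨Z⁻¹, Matrix.mul_nonsing_inv Z hZdet, Matrix.nonsing_inv_mul Z hZdet⟩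
    rwa [hZ.1.eq] at this
  have hsub : (Y - Z * X⁻¹ * Z).PosSemidef := by
    refine Matrix.posSemidef_iff_dotProduct_mulVec.mpr ⟨hY.sub hEpd.1, ?_⟩
    intro v
    obtain ⟨w, hw⟩ : ∃ w, Z *ᵥ v = w := ⟨_, rfl⟩
    have hq := h (-(X⁻¹ *ᵥ w)) v
    have a1 : (-(X⁻¹ *ᵥ w)) ⬝ᵥ (X *ᵥ (-(X⁻¹ *ᵥ w))) = w ⬝ᵥ (X⁻¹ *ᵥ w) := by
      rw [Matrix.mulVec_neg, Matrix.mulVec_mulVec, hXX, Matrix.one_mulVec,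
        neg_dotProduct, dotProduct_neg, neg_neg]
      exact dotProduct_comm _ _
    have a2 : (-(X⁻¹ *ᵥ w)) ⬝ᵥ (Z *ᵥ v) = -(w ⬝ᵥ (X⁻¹ *ᵥ w)) := by
      rw [hw, neg_dotProduct]
      congr 1
      exact dotProduct_comm _ _
    have a3 : v ⬝ᵥ ((Z * X⁻¹ * Z) *ᵥ v) = w ⬝ᵥ (X⁻¹ *ᵥ w) := by
      rw [← Matrix.mulVec_mulVec, hw, ← Matrix.mulVec_mulVec,
        Matrix.dotProduct_mulVec, vecMul_symm hZt, hw]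
    rw [a1, a2] at hq
    have hsv : star v = v := by simp [star_trivial]
    rw [hsv, Matrix.sub_mulVec, dotProduct_sub, a3]
    linarith [hq]
  have hdE := det_le_det_of_sub_posSemidef hEpd hsub
  have hXi : X.det * X⁻¹.det = 1 := by
    rw [← Matrix.det_mul, hXX, Matrix.det_one]
  have hdEeq : (Z * X⁻¹ * Z).det = Z.det * X⁻¹.det * Z.det := by
    rw [Matrix.det_mul, Matrix.det_mul]
  rw [hdEeq] at hdE
  nlinarith [hX.det_pos, hZ.det_pos,
    mul_le_mul_of_nonneg_left hdE (le_of_lt hX.det_pos), hXi]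

lemma sum_mulVec' {a b : ℕ} {ι : Type*} (s : Finset ι) (f : ι → Matrix (Fin a) (Fin b) ℝ)
    (v : Fin b → ℝ) : (∑ j ∈ s, f j) *ᵥ v = ∑ j ∈ s, f j *ᵥ v := by
  ext i
  simp only [Matrix.mulVec, dotProduct, Finset.sum_apply, Finset.sum_mul,
    Matrix.sum_apply]
  exact Finset.sum_comm

lemma dotProduct_sum' {b : ℕ} {ι : Type*} (s : Finset ι) (u : Fin b → ℝ)
    (w : ι → Fin b → ℝ) : u ⬝ᵥ (∑ j ∈ s, w j) = ∑ j ∈ s, u ⬝ᵥ w j := by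
  simp only [dotProduct, Finset.sum_apply, Finset.mul_sum]
  exact Finset.sum_comm

lemma sum_quad {n m : ℕ} (nj : Fin m → ℕ) (B : ∀ j, Matrix (Fin (nj j)) (Fin n) ℝ)
    (p : Fin m → ℝ) (A : ∀ j, Matrix (Fin (nj j)) (Fin (nj j)) ℝ) (u v : Fin n → ℝ) :
    u ⬝ᵥ ((∑ j, p j • ((B j)ᵀ * A j * B j)) *ᵥ v)
      = ∑ j, p j * ((B j *ᵥ u) ⬝ᵥ (A j *ᵥ (B j *ᵥ v))) := by
  rw [sum_mulVec', dotProduct_sum']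
  refine Finset.sum_congr rfl fun j _ => ?_
  rw [Matrix.smul_mulVec, dotProduct_smul, smul_eq_mul]
  congr 1
  rw [← Matrix.mulVec_mulVec, ← Matrix.mulVec_mulVec, Matrix.dotProduct_mulVec,
    Matrix.vecMul_transpose]

theorem stmt9 {n m : ℕ} (nj : Fin m → ℕ)
    (B : ∀ j : Fin m, Matrix (Fin (nj j)) (Fin n) ℝ) (p : Fin m → ℝ)
    (hrank : ∀ j, Function.Surjective (B j).mulVecLin)
    (hp : ∀ j, 0 ≤ p j)
    (L : (∀ j : Fin m, Matrix (Fin (nj j)) (Fin (nj j)) ℝ) → ℝ)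
    (hL : ∀ A, L A = ∑ j, p j * Real.log (A j).det -
      Real.log (∑ j, p j • ((B j)ᵀ * A j * B j)).det)
    (P Q : ∀ j : Fin m, Matrix (Fin (nj j)) (Fin (nj j)) ℝ)
    (hP : ∀ j, (P j).PosDef) (hQ : ∀ j, (Q j).PosDef) :
    L (fun j => gmean (P j) (Q j)) ≥ (1/2) * L P + (1/2) * L Q := by
  classical
  have hGspec := fun j => gmean_spec (hP j) (hQ j)
  have hGpd : ∀ j, (gmean (P j) (Q j)).PosDef := fun j => (hGspec j).1
  have hGPG : ∀ j, gmean (P j) (Q j) * (P j)⁻¹ * gmean (P j) (Q j) = Q j :=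
    fun j => (hGspec j).2.1
  have hGlog : ∀ j, Real.log (gmean (P j) (Q j)).det
      = (1/2) * Real.log (P j).det + (1/2) * Real.log (Q j).det := fun j => (hGspec j).2.2
  simp only [hL]
  have hsum1 : ∑ j, p j * Real.log (gmean (P j) (Q j)).det
      = (1/2) * (∑ j, p j * Real.log ((P j)).det)
        + (1/2) * (∑ j, p j * Real.log ((Q j)).det) := by
    rw [Finset.mul_sum, Finset.mul_sum, ← Finset.sum_add_distrib]
    refine Finset.sum_congr rfl fun j _ => ?_
    rw [hGlog j]; ring
  have hHerm : ∀ (A : ∀ j : Fin m, Matrix (Fin (nj j)) (Fin (nj j)) ℝ),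
      (∀ j, (A j).IsHermitian) → (∑ j, p j • ((B j)ᵀ * A j * B j)).IsHermitian := by
    intro A hA
    unfold Matrix.IsHermitian
    rw [Matrix.conjTranspose_sum]
    refine Finset.sum_congr rfl fun j _ => ?_
    rw [Matrix.conjTranspose_smul, star_trivial]
    congr 1
    have := Matrix.isHermitian_conjTranspose_mul_mul (B j) (hA j)
    rwa [Matrix.conjTranspose_eq_transpose_of_trivial] at this
  have hpos : ∀ (A : ∀ j : Fin m, Matrix (Fin (nj j)) (Fin (nj j)) ℝ),
      (∀ j, (A j).PosDef) →
      (∀ x : Fin n → ℝ, (∀ j, p j ≠ 0 → B j *ᵥ x = 0) → x = 0) →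
      (∑ j, p j • ((B j)ᵀ * A j * B j)).PosDef := by
    intro A hA hker
    refine Matrix.posDef_iff_dotProduct_mulVec.mpr ⟨hHerm A (fun j => (hA j).1), ?_⟩
    intro x hx
    have hq := sum_quad nj B p A x x
    rw [star_trivial, hq]
    obtain ⟨j0, hj0⟩ : ∃ j, p j ≠ 0 ∧ B j *ᵥ x ≠ 0 := by
      by_contra hcon
      push_neg at hcon
      exact hx (hker x (fun j hj => hcon j hj))
    refine Finset.sum_pos' (fun j _ => mul_nonneg (hp j) ?_) ⟨j0, Finset.mem_univ _, ?_⟩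
    · have := (hA j).posSemidef.dotProduct_mulVec_nonneg (B j *ᵥ x)
      simpa [star_trivial] using this
    · refine mul_pos (lt_of_le_of_ne (hp j0) (Ne.symm hj0.1)) ?_
      have := (hA j0).dotProduct_mulVec_pos hj0.2
      simpa [star_trivial] using this
  by_cases hker : ∀ x : Fin n → ℝ, (∀ j, p j ≠ 0 → B j *ᵥ x = 0) → x = 0
  · have hXpd := hpos P hP hker
    have hYpd := hpos Q hQ hker
    have hZpd := hpos (fun j => gmean (P j) (Q j)) hGpd hker
    have hquad : ∀ u v : Fin n → ℝ,
        0 ≤ u ⬝ᵥ ((∑ j, p j • ((B j)ᵀ * P j * B j)) *ᵥ u)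
          + 2 * (u ⬝ᵥ ((∑ j, p j • ((B j)ᵀ * gmean (P j) (Q j) * B j)) *ᵥ v))
          + v ⬝ᵥ ((∑ j, p j • ((B j)ᵀ * Q j * B j)) *ᵥ v) := by
      intro u v
      rw [sum_quad, sum_quad, sum_quad, Finset.mul_sum, ← Finset.sum_add_distrib,
        ← Finset.sum_add_distrib]
      refine Finset.sum_nonneg fun j _ => ?_
      have h1 := quad_nonneg_of_gpg (hP j) (hGpd j).1 (hGPG j) (B j *ᵥ u) (B j *ᵥ v)
      have h2 := mul_nonneg (hp j) h1
      nlinarith [h2]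
    have hkd := key_det_ineq hXpd hYpd.1 hZpd hquad
    have hXne : (∑ j, p j • ((B j)ᵀ * P j * B j)).det ≠ 0 := ne_of_gt hXpd.det_pos
    have hYne : (∑ j, p j • ((B j)ᵀ * Q j * B j)).det ≠ 0 := ne_of_gt hYpd.det_pos
    have hZne : (∑ j, p j • ((B j)ᵀ * gmean (P j) (Q j) * B j)).det ≠ 0 :=
      ne_of_gt hZpd.det_pos
    have l1 := Real.log_le_log (mul_pos hZpd.det_pos hZpd.det_pos) hkd
    rw [Real.log_mul hZne hZne, Real.log_mul hXne hYne] at l1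
    rw [ge_iff_le]
    linarith [hsum1, l1]
  · push_neg at hker
    obtain ⟨x, hx1, hx2⟩ := hker
    have hz : ∀ (A : ∀ j : Fin m, Matrix (Fin (nj j)) (Fin (nj j)) ℝ),
        (∑ j, p j • ((B j)ᵀ * A j * B j)) *ᵥ x = 0 := by
      intro A
      rw [sum_mulVec']
      apply Finset.sum_eq_zero
      intro j _
      by_cases hpj : p j = 0
      · simp [hpj]
      · rw [Matrix.smul_mulVec, ← Matrix.mulVec_mulVec, ← Matrix.mulVec_mulVec,
          hx1 j hpj]
        simp
    have hdet0 : ∀ (A : ∀ j : Fin m, Matrix (Fin (nj j)) (Fin (nj j)) ℝ),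
        (∑ j, p j • ((B j)ᵀ * A j * B j)).det = 0 := fun A =>
      Matrix.exists_mulVec_eq_zero_iff.mp ⟨x, hx2, hz A⟩
    rw [hdet0 P, hdet0 Q, hdet0 (fun j => gmean (P j) (Q j)), Real.log_zero]
    rw [ge_iff_le]
    linarith [hsum1]
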